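/- Let t ≥ 2 and n = 2^{t-1} - 1. Then A_{(t-1)} = J_n · (A_{(t-1)})ᵀ over F_2. -/

import Mathlib

/-- The unipotent Jordan block of size `n` over `F₂`: `1`'s on the main diagonal
and on the superdiagonal, `0`'s elsewhere. -/
def Jmat (n : ℕ) : Matrix (Fin n) (Fin n) (ZMod 2) :=
  fun i j => if (j : ℕ) = (i : ℕ) ∨ (j : ℕ) = (i : ℕ) + 1 then 1 else 0

/-- The `s`-fold Kronecker power of the `2 × 2` matrix `[[1,1],[1,0]]` over `F₂`. -/
def kronPow : (s : ℕ) → Matrix (Fin (2 ^ s)) (Fin (2 ^ s)) (ZMod 2)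
  | 0 => 1
  | s + 1 =>
      Matrix.reindex (finProdFinEquiv.trans (finCongr (by ring)))
        (finProdFinEquiv.trans (finCongr (by ring)))
        (Matrix.kroneckerMap (· * ·)
          (!![1, 1; 1, 0] : Matrix (Fin 2) (Fin 2) (ZMod 2)) (kronPow s))

/-- The matrix `A_{(s)}`: the `(2^s - 1) × (2^s - 1)` matrix obtained from the
`s`-fold Kronecker power of `[[1,1],[1,0]]` by deleting its first row and its
last column. -/
def Amat (s : ℕ) : Matrix (Fin (2 ^ s - 1)) (Fin (2 ^ s - 1)) (ZMod 2) :=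
  (kronPow s).submatrix
    (fun i => Fin.cast (Nat.sub_add_cancel Nat.one_le_two_pow) i.succ)
    (fun j => Fin.cast (Nat.sub_add_cancel Nat.one_le_two_pow) j.castSucc)

/-- Indicator (in `F₂`) of bitwise disjointness of two naturals. -/
noncomputable def chi (x y : ℕ) : ZMod 2 := if x &&& y = 0 then 1 else 0

lemma land_eq_zero_iff (x y : ℕ) :
    x &&& y = 0 ↔ ∀ k, ¬(x.testBit k = true ∧ y.testBit k = true) := by
  constructor
  · intro h k ⟨hx, hy⟩
    have := Nat.testBit_and x y k
    rw [h, Nat.zero_testBit, hx, hy] at this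
    simp at this
  · intro h
    apply Nat.eq_of_testBit_eq
    intro k
    have := h k
    simp only [Nat.testBit_and, Nat.zero_testBit]
    cases hx : x.testBit k <;> cases hy : y.testBit k <;> simp_all

lemma land_split {s : ℕ} (a a' : ℕ) {b b' : ℕ} (hb : b < 2 ^ s) (hb' : b' < 2 ^ s) :
    (2 ^ s * a + b) &&& (2 ^ s * a' + b') = 0 ↔ a &&& a' = 0 ∧ b &&& b' = 0 := by
  simp only [land_eq_zero_iff]
  constructor
  · intro h
    constructor
    · intro k ⟨hx, hy⟩
      refine h (k + s) ⟨?_, ?_⟩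
      · rw [Nat.testBit_two_pow_mul_add a hb]; simpa using hx
      · rw [Nat.testBit_two_pow_mul_add a' hb']; simpa using hy
    · intro k ⟨hx, hy⟩
      rcases lt_or_ge k s with hk | hk
      · refine h k ⟨?_, ?_⟩
        · rw [Nat.testBit_two_pow_mul_add a hb]; simp [hk, hx]
        · rw [Nat.testBit_two_pow_mul_add a' hb']; simp [hk, hy]
      · exact absurd hx (by simp [Nat.testBit_lt_two_pow
          (lt_of_lt_of_le hb (Nat.pow_le_pow_right (by norm_num) hk))])
  · intro ⟨h1, h2⟩ k ⟨hx, hy⟩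
    rw [Nat.testBit_two_pow_mul_add a hb] at hx
    rw [Nat.testBit_two_pow_mul_add a' hb'] at hy
    rcases lt_or_ge k s with hk | hk
    · simp only [if_pos hk] at hx hy
      exact h2 k ⟨hx, hy⟩
    · simp only [if_neg (not_lt.mpr hk)] at hx hy
      exact h1 (k - s) ⟨hx, hy⟩

lemma chi00 (a b : ℕ) : chi (2*a) (2*b) = chi a b := by
  have h := land_split (s := 1) a b (b := 0) (b' := 0) (by norm_num) (by norm_num)
  simp only [pow_one, add_zero] at h
  unfold chi; simp [h]

lemma chi10 (a b : ℕ) : chi (2*a+1) (2*b) = chi a b := by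
  have h := land_split (s := 1) a b (b := 1) (b' := 0) (by norm_num) (by norm_num)
  simp only [pow_one, add_zero] at h
  unfold chi; simp [h]

lemma chi01 (a b : ℕ) : chi (2*a) (2*b+1) = chi a b := by
  have h := land_split (s := 1) a b (b := 0) (b' := 1) (by norm_num) (by norm_num)
  simp only [pow_one, add_zero] at h
  unfold chi; simp [h]

lemma chi11 (a b : ℕ) : chi (2*a+1) (2*b+1) = 0 := by
  have h := land_split (s := 1) a b (b := 1) (b' := 1) (by norm_num) (by norm_num)
  simp only [pow_one] at h
  unfold chi
  rw [if_neg]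
  rw [h]
  simp

lemma chi_pascal (i : ℕ) : ∀ j : ℕ, chi (i + 1) j + chi i (j + 1) + chi (i + 1) (j + 1) = 0 := by
  induction i using Nat.strong_induction_on with
  | _ i IH =>
    intro j
    obtain ⟨q, rfl | rfl⟩ := Nat.even_or_odd' i <;>
      obtain ⟨r, rfl | rfl⟩ := Nat.even_or_odd' j
    · rw [chi10, chi01, chi11, add_zero, CharTwo.add_self_eq_zero]
    · have e : 2 * r + 1 + 1 = 2 * (r + 1) := by ring
      rw [e, chi11, chi00, chi10, zero_add, CharTwo.add_self_eq_zero]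
    · have e : 2 * q + 1 + 1 = 2 * (q + 1) := by ring
      rw [e, chi00, chi11, chi01, add_zero, CharTwo.add_self_eq_zero]
    · have e1 : 2 * q + 1 + 1 = 2 * (q + 1) := by ring
      have e2 : 2 * r + 1 + 1 = 2 * (r + 1) := by ring
      rw [e1, e2, chi01, chi10, chi00]
      exact IH q (by omega) r

lemma char2_eq_of_add_eq_zero {a b : ZMod 2} (h : a + b = 0) : a = b := by
  calc a = a + (b + b) := by rw [CharTwo.add_self_eq_zero, add_zero]
    _ = (a + b) + b := by ring
    _ = b := by rw [h, zero_add]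

lemma chi_comm (x y : ℕ) : chi x y = chi y x := by
  unfold chi; rw [Nat.land_comm]

lemma Mval : ∀ a a' : Fin 2, (!![1, 1; 1, 0] : Matrix (Fin 2) (Fin 2) (ZMod 2)) a a' =
    if (a : ℕ) &&& (a' : ℕ) = 0 then 1 else 0 := by
  intro a a'; fin_cases a <;> fin_cases a' <;> rfl

lemma kron_apply : ∀ (s : ℕ) (i j : Fin (2 ^ s)), kronPow s i j = chi (i : ℕ) (j : ℕ) := by
  intro s
  induction s with
  | zero =>
    intro i j
    have hi0 : (i : ℕ) = 0 := by
      have h1 : (i : ℕ) < 1 := by simpa using i.isLt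
      omega
    have hj0 : (j : ℕ) = 0 := by
      have h1 : (j : ℕ) < 1 := by simpa using j.isLt
      omega
    have hij : i = j := Fin.ext (by rw [hi0, hj0])
    subst hij
    rw [show kronPow 0 = 1 from rfl, Matrix.one_apply_eq, hi0]
    unfold chi
    simp
  | succ s IH =>
    intro i j
    have h : kronPow (s+1) i j =
        !![1, 1; 1, 0] (Fin.divNat ((finCongr (by ring : 2*2^s = 2^(s+1))).symm i))
          (Fin.divNat ((finCongr (by ring : 2*2^s = 2^(s+1))).symm j)) *
        kronPow s (Fin.modNat ((finCongr (by ring : 2*2^s = 2^(s+1))).symm i))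
          (Fin.modNat ((finCongr (by ring : 2*2^s = 2^(s+1))).symm j)) := by
      simp [kronPow, Matrix.reindex_apply, Matrix.submatrix_apply, finProdFinEquiv,
        Matrix.kroneckerMap_apply]
    rw [h, Mval, IH]
    have hv1 : ((Fin.divNat ((finCongr (by ring : 2*2^s = 2^(s+1))).symm i)) : ℕ)
        = (i : ℕ) / 2 ^ s := rfl
    have hv2 : ((Fin.divNat ((finCongr (by ring : 2*2^s = 2^(s+1))).symm j)) : ℕ)
        = (j : ℕ) / 2 ^ s := rfl
    have hv3 : ((Fin.modNat ((finCongr (by ring : 2*2^s = 2^(s+1))).symm i)) : ℕ)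
        = (i : ℕ) % 2 ^ s := rfl
    have hv4 : ((Fin.modNat ((finCongr (by ring : 2*2^s = 2^(s+1))).symm j)) : ℕ)
        = (j : ℕ) % 2 ^ s := rfl
    rw [hv1, hv2, hv3, hv4]
    have di : (i : ℕ) = 2 ^ s * ((i : ℕ) / 2 ^ s) + (i : ℕ) % 2 ^ s :=
      (Nat.div_add_mod _ _).symm
    have dj : (j : ℕ) = 2 ^ s * ((j : ℕ) / 2 ^ s) + (j : ℕ) % 2 ^ s :=
      (Nat.div_add_mod _ _).symm
    conv_rhs => rw [di, dj]
    unfold chi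
    simp only [land_split _ _ (Nat.mod_lt _ (by positivity)) (Nat.mod_lt _ (by positivity))]
    clear h IH hv1 hv2 hv3 hv4 di dj
    split_ifs <;> simp_all

lemma Amat_apply (s : ℕ) (i j : Fin (2 ^ s - 1)) :
    Amat s i j = chi ((i : ℕ) + 1) (j : ℕ) := by
  unfold Amat
  rw [Matrix.submatrix_apply, kron_apply]
  simp

theorem stmt_12 (t : ℕ) (ht : 2 ≤ t) :
    Amat (t - 1) = Jmat (2 ^ (t - 1) - 1) * (Amat (t - 1)).transpose := by
  set s := t - 1 with hs
  set n := 2 ^ s - 1 with hn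
  ext i j
  have hsplit : ∀ k : Fin n, Jmat n i k * (Amat s).transpose k j
      = (if k = i then (Amat s).transpose k j else 0)
        + (if (k : ℕ) = (i : ℕ) + 1 then (Amat s).transpose k j else 0) := by
    intro k
    unfold Jmat
    by_cases h1 : (k : ℕ) = (i : ℕ) <;> by_cases h2 : (k : ℕ) = (i : ℕ) + 1
    · omega
    · simp [h1, h2, Fin.ext_iff]
    · simp [h1, h2, Fin.ext_iff]
    · simp [h1, h2, Fin.ext_iff]
  rw [Matrix.mul_apply, Finset.sum_congr rfl (fun k _ => hsplit k),
    Finset.sum_add_distrib, Finset.sum_ite_eq' Finset.univ i, if_pos (Finset.mem_univ i)]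
  rw [Matrix.transpose_apply, Amat_apply, Amat_apply]
  by_cases h : (i : ℕ) + 1 < n
  · have hsum : (∑ k : Fin n, if (k : ℕ) = (i : ℕ) + 1
        then (Amat s).transpose k j else 0) = (Amat s).transpose ⟨(i : ℕ) + 1, h⟩ j := by
      rw [Finset.sum_eq_single (⟨(i : ℕ) + 1, h⟩ : Fin n)]
      · simp
      · intro k _ hk
        rw [if_neg]
        simpa [Fin.ext_iff] using hk
      · simp
    rw [hsum, Matrix.transpose_apply, Amat_apply]
    have hp := chi_pascal (i : ℕ) (j : ℕ)
    have : chi ((i : ℕ) + 1) (j : ℕ)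
        + (chi (i : ℕ) ((j : ℕ) + 1) + chi ((i : ℕ) + 1) ((j : ℕ) + 1)) = 0 := by
      rw [← hp]; ring
    have := char2_eq_of_add_eq_zero this
    rw [this, chi_comm (i : ℕ) ((j : ℕ) + 1), chi_comm ((i : ℕ) + 1) ((j : ℕ) + 1)]
  · have hsum : (∑ k : Fin n, if (k : ℕ) = (i : ℕ) + 1
        then (Amat s).transpose k j else 0) = 0 := by
      apply Finset.sum_eq_zero
      intro k _
      rw [if_neg]
      have := k.isLt
      omega
    rw [hsum, add_zero]
    -- here i + 1 = n = 2^s - 1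
    have hin : (i : ℕ) + 1 = n := by have := i.isLt; omega
    have hjlt : (j : ℕ) + 1 < 2 ^ s := by
      have := j.isLt
      have h2 : 1 ≤ 2 ^ s := Nat.one_le_two_pow
      omega
    have hzero : chi ((j : ℕ) + 1) ((i : ℕ) + 1) = 0 := by
      unfold chi
      rw [if_neg]
      intro hc
      rw [hin, hn, land_eq_zero_iff] at hc
      obtain ⟨k, hk⟩ := Nat.exists_testBit_of_ne_zero (x := (j : ℕ) + 1) (by omega)
      have hks : ¬ k < s := by
        intro hks
        exact hc k ⟨hk, by simp [hks]⟩
      have := Nat.ge_two_pow_of_testBit hk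
      have : 2 ^ s ≤ 2 ^ k := Nat.pow_le_pow_right (by norm_num) (by omega)
      omega
    have hp := chi_pascal (i : ℕ) (j : ℕ)
    rw [chi_comm ((j : ℕ) + 1) ((i : ℕ) + 1)] at hzero
    rw [hzero, add_zero] at hp
    have := char2_eq_of_add_eq_zero hp
    rw [this, chi_comm]
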